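/- arXiv:2605.09489 — 3 statements merged into one kernel-verified Lean document; each statement's English description precedes it below -/
import Mathlib

section
/- For odd m and any b : Σ^{n-1} → {0,1}, the sign of the successor permutation f_S = A_b ∘ σ equals the sign of the cyclic shift σ on Σ^n, independently of b. -/
/-- The cyclic left shift on `Fin n → α`: `(x_1,…,x_n) ↦ (x_2,…,x_n,x_1)`. -/
def cycShift {α : Type*} {n : ℕ} (x : Fin n → α) : Fin n → α :=
  fun i => if h : (i : ℕ) + 1 < n then x ⟨(i : ℕ) + 1, h⟩
           else x ⟨0, Nat.lt_of_le_of_lt (Nat.zero_le _) i.isLt⟩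

/-- The suffix `(x_2,…,x_n)` of `x = (x_1,…,x_n)`. -/
def sfx {m n : ℕ} (x : Fin n → ZMod m) : Fin (n - 1) → ZMod m :=
  fun j => x ⟨(j : ℕ) + 1, by have := j.isLt; omega⟩

/-- The successor map `f_S(x_1,…,x_n) = (x_2,…,x_n, x_1 + b(x_2,…,x_n))`. -/
def fS {m n : ℕ} (b : (Fin (n - 1) → ZMod m) → ZMod m) (x : Fin n → ZMod m) :
    Fin n → ZMod m :=
  fun i => if h : (i : ℕ) + 1 < n then x ⟨(i : ℕ) + 1, h⟩
           else x ⟨0, Nat.lt_of_le_of_lt (Nat.zero_le _) i.isLt⟩ + b (sfx x)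

lemma sign_addLeft_aux (m : ℕ) [NeZero m] (hm : Odd m) (c : ZMod m)
    (hc : c = 0 ∨ c = 1) : Equiv.Perm.sign (Equiv.addLeft c) = 1 := by
  rcases hc with rfl | rfl
  · rw [Equiv.addLeft_zero, map_one]
  · have hp : (Equiv.addLeft (1 : ZMod m)) ^ m = 1 := by
      rw [show ∀ n : ℕ, (Equiv.addLeft (1 : ZMod m)) ^ n = Equiv.addLeft (n • (1 : ZMod m)) from by
        intro n
        induction n with
        | zero => ext x; simp
        | succ n ih =>
          rw [pow_succ, ih]
          ext x
          simp only [Equiv.Perm.mul_apply, Equiv.coe_addLeft, succ_nsmul]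
          abel]
      have h0 : (m • (1 : ZMod m)) = 0 := by
        simp [nsmul_eq_mul, ZMod.natCast_self]
      rw [h0, Equiv.addLeft_zero]
    have hsp : (Equiv.Perm.sign (Equiv.addLeft (1 : ZMod m))) ^ m = 1 := by
      rw [← map_pow, hp, map_one]
    rcases Int.units_eq_one_or (Equiv.Perm.sign (Equiv.addLeft (1 : ZMod m))) with h | h
    · exact h
    · rw [h, hm.neg_one_pow] at hsp
      exact absurd hsp (by decide)

/-- for odd `m` and any `b : Σ^{n-1} → {0,1}`, the sign of the
successor permutation `f_S` equals the sign of the cyclic shift `σ`,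
independently of `b`. -/
theorem sign_fS_eq_sign_shift (m n : ℕ) [NeZero m] (hm : Odd m) (hn : 0 < n)
    (b : (Fin (n - 1) → ZMod m) → ZMod m) (hb : ∀ y, b y = 0 ∨ b y = 1)
    (f s : Equiv.Perm (Fin n → ZMod m))
    (hf : ∀ x, f x = fS b x) (hs : ∀ x, s x = cycShift x) :
    Equiv.Perm.sign f = Equiv.Perm.sign s := by
  obtain ⟨k, rfl⟩ := Nat.exists_eq_succ_of_ne_zero hn.ne'
  -- the "shear" A = f * s⁻¹ adds b (of all but the last coordinate) to the last coordinate
  set A : Equiv.Perm (Fin (k + 1) → ZMod m) := f * s⁻¹ with hA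
  have hfA : f = A * s := by rw [hA, mul_assoc, inv_mul_cancel, mul_one]
  -- equivalence splitting off the last coordinate
  let E : (Fin (k + 1) → ZMod m) ≃ ((Fin k → ZMod m) × ZMod m) :=
    { toFun := fun x => (fun j => x j.castSucc, x (Fin.last k))
      invFun := fun p => Fin.snoc p.1 p.2
      left_inv := fun x => by
        funext i
        induction i using Fin.lastCases with
        | last => simp
        | cast j => simp
      right_inv := fun p => by
        ext
        · simp
        · simp }
  let b' : (Fin k → ZMod m) → ZMod m := fun y => b y
  let G : Equiv.Perm ((Fin k → ZMod m) × ZMod m) :=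
    Equiv.prodCongrRight (fun y => Equiv.addLeft (b' y))
  have key : ∀ x, E (A x) = G (E x) := by
    intro x
    obtain ⟨z, rfl⟩ : ∃ z, x = s z := ⟨s⁻¹ x, (s.apply_symm_apply x).symm⟩
    have hx : A (s z) = f z := by
      rw [hA]
      show f (s⁻¹ (s z)) = f z
      rw [show s⁻¹ (s z) = z from s.symm_apply_apply z]
    rw [hx, hf, hs]
    have h2 : (fun j : Fin k => cycShift z j.castSucc) = sfx z := by
      funext j
      show cycShift z j.castSucc = z _
      rw [cycShift]
      have : ((j.castSucc : Fin (k+1)) : ℕ) + 1 < k + 1 := by simp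
      rw [dif_pos this]
      congr 1
    show ((fun j : Fin k => fS b z j.castSucc), fS b z (Fin.last k)) =
      ((fun j : Fin k => cycShift z j.castSucc),
        b' (fun j => cycShift z j.castSucc) + cycShift z (Fin.last k))
    refine Prod.ext ?_ ?_
    · -- first components
      funext j
      have hjlt : ((j.castSucc : Fin (k+1)) : ℕ) + 1 < k + 1 := by simp
      show fS b z j.castSucc = cycShift z j.castSucc
      rw [fS, dif_pos hjlt, cycShift, dif_pos hjlt]
    · -- last entry
      show fS b z (Fin.last k) = b' (fun j => cycShift z j.castSucc) + cycShift z (Fin.last k)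
      have h1 : ¬ ((Fin.last k : Fin (k+1)) : ℕ) + 1 < k + 1 := by simp
      rw [fS, dif_neg h1, cycShift, dif_neg h1, h2]
      show z _ + b (sfx z) = b (sfx z) + z _
      rw [add_comm]
  have hsignA : Equiv.Perm.sign A = 1 := by
    rw [Equiv.Perm.sign_eq_sign_of_equiv A G E key, Equiv.Perm.sign_prodCongrRight]
    refine Finset.prod_eq_one fun y _ => ?_
    exact sign_addLeft_aux m hm (b' y) (hb y)
  rw [hfA, map_mul, hsignA, one_mul]
end

section
/- If m ≡ 3 (mod 4) and n is even, then the necklace count N(n,m) = (1/n)·Σ_{d|n} φ(d)·m^{n/d} is even. -/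
open Finset
open Fin.NatCast
open Fin.CommRing

lemma finValAdd (n : ℕ) [NeZero n] (i : Fin n) (a : ℕ) :
    Fin.val (i + (a : Fin n)) = (i.val + a) % n := by
  rw [Fin.val_add, Fin.val_natCast, Nat.add_mod, Nat.mod_mod_of_dvd _ (dvd_refl n), ← Nat.add_mod]

lemma cycShift_apply {α : Type*} {n : ℕ} [NeZero n] (x : Fin n → α) (i : Fin n) :
    cycShift x i = x (i + ((1:ℕ) : Fin n)) := by
  unfold cycShift
  have hval : Fin.val (i + ((1:ℕ):Fin n)) = (i.val + 1) % n := finValAdd n i 1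
  by_cases h : (i:ℕ) + 1 < n
  · rw [dif_pos h]
    congr 1
    apply Fin.ext
    rw [hval, Nat.mod_eq_of_lt h]
  · rw [dif_neg h]
    congr 1
    have hlt := i.isLt
    have hn : (i:ℕ) + 1 = n := by omega
    apply Fin.ext
    rw [hval, hn, Nat.mod_self]

lemma shift_pow_apply {A : Type} {n : ℕ} [NeZero n] (s : Equiv.Perm (Fin n → A))
    (hs : ∀ x, s x = cycShift x) (k : ℕ) :
    ∀ (x : Fin n → A) (i : Fin n), (s ^ k) x i = x (i + (k : Fin n)) := by
  induction k with
  | zero => intro x i; simp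
  | succ k ih =>
    intro x i
    rw [pow_succ, Equiv.Perm.mul_apply, ih (s x) i, hs x, cycShift_apply]
    congr 1
    push_cast
    ring

lemma pow_fixed_iff {A : Type} {n : ℕ} [NeZero n] (s : Equiv.Perm (Fin n → A))
    (hs : ∀ x, s x = cycShift x) (k : ℕ) (x : Fin n → A) :
    (s ^ k) x = x ↔ ∀ i, x (i + (k : Fin n)) = x i := by
  constructor
  · intro h i
    conv_rhs => rw [← h]
    rw [shift_pow_apply s hs k x i]
  · intro h
    funext i
    rw [shift_pow_apply s hs k x i, h i]

/-- invariance under multiples -/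
lemma invar_mul {A : Type} {n : ℕ} [NeZero n] (x : Fin n → A) (k : ℕ)
    (hx : ∀ i, x (i + (k : Fin n)) = x i) (t : ℕ) :
    ∀ i, x (i + ((t * k : ℕ) : Fin n)) = x i := by
  induction t with
  | zero => intro i; simp
  | succ t ih =>
    intro i
    have : ((((t+1) * k : ℕ)) : Fin n) = ((t * k : ℕ) : Fin n) + ((k:ℕ) : Fin n) := by
      push_cast; ring
    rw [this, ← add_assoc, hx (i + ((t * k : ℕ) : Fin n))]
    exact ih i

/-- invariance under any multiple of gcd n k -/
lemma invar_gcd {A : Type} {n : ℕ} [NeZero n] (x : Fin n → A) (k : ℕ)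
    (hx : ∀ i, x (i + (k : Fin n)) = x i) (c : ℕ) (hc : Nat.gcd n k ∣ c) :
    ∀ i, x (i + (c : Fin n)) = x i := by
  obtain ⟨w, hw⟩ := hc
  have hn0 : 0 < n := Nat.pos_of_ne_zero (NeZero.ne n)
  -- Bezout
  set α : ℤ := Nat.gcdA n k with hα
  set β : ℤ := Nat.gcdB n k with hβ
  have hbez : (Nat.gcd n k : ℤ) = n * α + k * β := Nat.gcd_eq_gcd_ab n k
  set T : ℤ := β * w with hT
  set t : ℕ := (T % n).toNat with ht
  have hnn : (0:ℤ) < n := by exact_mod_cast hn0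
  have htz : (t:ℤ) = T % n := Int.toNat_of_nonneg (Int.emod_nonneg T (by omega))
  have htz' : (t:ℤ) = T - n * (T / n) := by rw [htz, Int.emod_def]
  have hdvd : (n:ℤ) ∣ (t*k : ℤ) - (c:ℤ) := by
    refine ⟨-((T/n)*k + α*w), ?_⟩
    have hcz : (c:ℤ) = ((n * α + k * β)) * w := by
      rw [← hbez]; exact_mod_cast congrArg (Nat.cast : ℕ → ℤ) hw
    rw [htz', hcz]
    ring
  have hmod : c % n = (t*k) % n := by
    have h2 : (c:ℤ) ≡ ((t*k:ℕ):ℤ) [ZMOD (n:ℤ)] :=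
      Int.modEq_iff_dvd.2 (by push_cast; exact hdvd)
    have h3 : (c:ℤ) % n = ((t*k:ℕ):ℤ) % n := h2
    exact_mod_cast h3
  have hcast : ((c:ℕ) : Fin n) = ((t*k : ℕ) : Fin n) := by
    apply Fin.ext
    rw [Fin.val_natCast, Fin.val_natCast, hmod]
  intro i
  rw [hcast]
  exact invar_mul x k hx t i

lemma card_fixed {A : Type} [Fintype A] [DecidableEq A] {n : ℕ} [NeZero n]
    (s : Equiv.Perm (Fin n → A)) (hs : ∀ x, s x = cycShift x) (k : ℕ) :
    Nat.card {x : Fin n → A // (s ^ k) x = x} = (Fintype.card A) ^ (Nat.gcd n k) := by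
  have hn0 : 0 < n := Nat.pos_of_ne_zero (NeZero.ne n)
  set g : ℕ := Nat.gcd n k with hg
  have hg0 : 0 < g := Nat.gcd_pos_of_pos_left k hn0
  haveI : NeZero g := ⟨hg0.ne'⟩
  have hgn : g ∣ n := Nat.gcd_dvd_left n k
  have hgle : g ≤ n := Nat.le_of_dvd hn0 hgn
  -- the map
  set F : (ZMod g → A) → (Fin n → A) := fun y i => y ((i.val : ℕ) : ZMod g) with hF
  have hFfix : ∀ y, (s ^ k) (F y) = F y := by
    intro y
    rw [pow_fixed_iff s hs]
    intro i
    show y _ = y _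
    congr 1
    rw [finValAdd n i k]
    have hmodn : (((i.val + k) % n : ℕ) : ZMod g) = ((i.val + k : ℕ) : ZMod g) := by
      conv_rhs => rw [← Nat.div_add_mod (i.val + k) n]
      push_cast
      rw [(ZMod.natCast_eq_zero_iff n g).2 hgn]
      ring
    rw [hmodn]
    push_cast
    rw [(ZMod.natCast_eq_zero_iff k g).2 (Nat.gcd_dvd_right n k)]
    ring
  have hFinj : Function.Injective F := by
    intro y1 y2 heq
    funext j
    have h1 := congrFun heq ⟨j.val, lt_of_lt_of_le (ZMod.val_lt j) hgle⟩
    show y1 j = y2 j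
    have hj : ((j.val : ℕ) : ZMod g) = j := ZMod.natCast_rightInverse j
    show y1 j = y2 j
    rw [← hj]
    exact h1
  set F' : (ZMod g → A) → {x : Fin n → A // (s ^ k) x = x} := fun y => ⟨F y, hFfix y⟩ with hF'
  have hbij : Function.Bijective F' := by
    constructor
    · intro y1 y2 h
      exact hFinj (congrArg Subtype.val h)
    · rintro ⟨x, hx⟩
      have hx' := (pow_fixed_iff s hs k x).mp hx
      refine ⟨fun j => x ⟨j.val, lt_of_lt_of_le (ZMod.val_lt j) hgle⟩, ?_⟩
      apply Subtype.ext
      simp only [hF']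
      funext i
      simp only [hF]
      have hvv : (((i.val : ℕ) : ZMod g)).val = i.val % g := ZMod.val_natCast g i.val
      set a : Fin n := ⟨i.val % g, lt_of_lt_of_le (Nat.mod_lt _ hg0) hgle⟩ with ha
      have step1 : x ⟨(((i.val : ℕ) : ZMod g)).val, lt_of_lt_of_le (ZMod.val_lt _) hgle⟩ = x a := by
        congr 1
        exact Fin.ext hvv
      rw [step1]
      set c : ℕ := i.val - i.val % g with hc
      have hdm := Nat.div_add_mod i.val g
      have hgc : g ∣ c := ⟨i.val / g, by omega⟩
      have h2 := invar_gcd x k hx' c hgc a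
      have h3 : a + (c : Fin n) = i := by
        apply Fin.ext
        rw [finValAdd]
        show (i.val % g + c) % n = i.val
        have hcc : i.val % g + c = i.val := by omega
        rw [hcc, Nat.mod_eq_of_lt i.isLt]
      rw [← h3, h2]
  have := Nat.card_congr (Equiv.ofBijective F' hbij)
  rw [← this, Nat.card_eq_fintype_card, Fintype.card_fun, ZMod.card g]

lemma orderOf_shift {A : Type} [Fintype A] [DecidableEq A] {n : ℕ} [NeZero n]
    (hA2 : 2 ≤ Fintype.card A) (s : Equiv.Perm (Fin n → A)) (hs : ∀ x, s x = cycShift x) :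
    orderOf s = n := by
  have hn0 : 0 < n := Nat.pos_of_ne_zero (NeZero.ne n)
  rw [orderOf_eq_iff hn0]
  constructor
  · apply Equiv.ext
    intro x
    show (s ^ n) x = x
    rw [pow_fixed_iff s hs]
    intro i
    have : ((n : ℕ) : Fin n) = 0 := by
      apply Fin.ext
      rw [Fin.val_natCast, Nat.mod_self, Fin.val_zero]
    rw [this, add_zero]
  · intro j hjn hj0 hcon
    obtain ⟨a, b, hab⟩ := Fintype.exists_pair_of_one_lt_card (α := A) (by omega)
    set x : Fin n → A := fun i => if i = 0 then a else b with hx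
    have hfix : (s ^ j) x = x := by rw [hcon]; rfl
    rw [pow_fixed_iff s hs] at hfix
    have h0 := hfix 0
    have hjne : ((j : ℕ) : Fin n) ≠ 0 := by
      intro h
      have := congrArg Fin.val h
      rw [Fin.val_natCast, Nat.mod_eq_of_lt hjn, Fin.val_zero] at this
      omega
    rw [zero_add] at h0
    have hxj : x ((j : ℕ) : Fin n) = b := by
      rw [hx]; simp [hjne]
    have hx0 : x 0 = a := by rw [hx]; simp
    rw [hxj, hx0] at h0
    exact hab h0.symm

lemma sum_gcd_pow (n : ℕ) (hn : n ≠ 0) (m : ℕ) :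
    ∑ k ∈ range n, m ^ (Nat.gcd n k) = ∑ d ∈ n.divisors, Nat.totient d * m ^ (n / d) := by
  have h1 : ∑ k ∈ range n, m ^ (Nat.gcd n k)
      = ∑ d ∈ n.divisors, ∑ k ∈ range n with n.gcd k = d, m ^ (Nat.gcd n k) :=
    (Finset.sum_fiberwise_of_maps_to (fun k _ => Nat.mem_divisors.2 ⟨Nat.gcd_dvd_left _ _, hn⟩) _).symm
  rw [h1]
  have h2 : ∀ d ∈ n.divisors, (∑ k ∈ range n with n.gcd k = d, m ^ (Nat.gcd n k))
      = Nat.totient (n / d) * m ^ d := by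
    intro d hd
    have : ∀ k ∈ filter (fun k => n.gcd k = d) (range n), m ^ (Nat.gcd n k) = m ^ d := by
      intro k hk
      rw [(Finset.mem_filter.mp hk).2]
    rw [Finset.sum_congr rfl this, Finset.sum_const, smul_eq_mul,
      ← Nat.totient_div_of_dvd (Nat.mem_divisors.mp hd).1]
  rw [Finset.sum_congr rfl h2]
  have h3 := Nat.sum_div_divisors n (fun d => Nat.totient (n / d) * m ^ d)
  calc ∑ d ∈ n.divisors, Nat.totient (n/d) * m ^ d
      = ∑ d ∈ n.divisors, Nat.totient (n/(n/d)) * m ^ (n/d) := h3.symm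
    _ = ∑ d ∈ n.divisors, Nat.totient d * m ^ (n/d) := by
        apply Finset.sum_congr rfl
        intro d hd
        rw [Nat.div_div_self (Nat.mem_divisors.mp hd).1 hn]

lemma partA (A : Type) [Fintype A] [DecidableEq A] (n : ℕ) (hn0 : 0 < n)
    (hA2 : 2 ≤ Fintype.card A)
    (s : Equiv.Perm (Fin n → A)) (hs : ∀ x, s x = cycShift x) :
    n * Nat.card (MulAction.orbitRel.Quotient (Subgroup.zpowers s) (Fin n → A)) =
      ∑ d ∈ n.divisors, Nat.totient d * (Fintype.card A) ^ (n / d) := by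
  haveI : NeZero n := ⟨hn0.ne'⟩
  classical
  haveI : Fintype (Subgroup.zpowers s) := Fintype.ofFinite _
  haveI hfb : ∀ a : (Subgroup.zpowers s), Fintype (MulAction.fixedBy (Fin n → A) a) :=
    fun a => Fintype.ofFinite _
  haveI : Fintype (MulAction.orbitRel.Quotient (Subgroup.zpowers s) (Fin n → A)) :=
    Fintype.ofFinite _
  have hb := MulAction.sum_card_fixedBy_eq_card_orbits_mul_card_group
    (Subgroup.zpowers s) (Fin n → A)
  have hord : orderOf s = n := orderOf_shift hA2 s hs
  have hcardG : Fintype.card (Subgroup.zpowers s) = n := by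
    rw [← Nat.card_eq_fintype_card, Nat.card_zpowers, hord]
  set ψ : Fin n → (Subgroup.zpowers s) :=
    fun i => ⟨s ^ (i : ℕ), Subgroup.pow_mem _ (Subgroup.mem_zpowers s) _⟩ with hψ
  have hψbij : Function.Bijective ψ := by
    constructor
    · intro i j hij
      have h1 : s ^ (i:ℕ) = s ^ (j:ℕ) := congrArg Subtype.val hij
      rw [pow_eq_pow_iff_modEq, hord] at h1
      have hi := i.isLt
      have hj := j.isLt
      apply Fin.ext
      have : (i:ℕ) % n = (j:ℕ) % n := h1
      rwa [Nat.mod_eq_of_lt hi, Nat.mod_eq_of_lt hj] at this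
    · rintro ⟨g, hg⟩
      obtain ⟨z, hz⟩ := Subgroup.mem_zpowers_iff.mp hg
      have hnz : (0:ℤ) < (n:ℤ) := by exact_mod_cast hn0
      set r : ℕ := (z % (n:ℤ)).toNat with hr
      have hrz : (r : ℤ) = z % n := Int.toNat_of_nonneg (Int.emod_nonneg z (by omega))
      have hrlt : r < n := by
        have := Int.emod_lt_of_pos z hnz
        omega
      refine ⟨⟨r, hrlt⟩, ?_⟩
      apply Subtype.ext
      show s ^ (r:ℕ) = g
      rw [← hz, ← zpow_natCast]
      rw [zpow_eq_zpow_iff_modEq, hord]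
      rw [Int.ModEq, hrz]
      simp [Int.emod_emod_of_dvd]
  have hsum : ∑ a : (Subgroup.zpowers s), Fintype.card (MulAction.fixedBy (Fin n → A) a)
      = ∑ i : Fin n, Fintype.card (MulAction.fixedBy (Fin n → A) (ψ i)) :=
    (Fintype.sum_bijective ψ hψbij _ _ (fun i => rfl)).symm
  have hterm : ∀ i : Fin n,
      Fintype.card (MulAction.fixedBy (Fin n → A) (ψ i))
        = (Fintype.card A) ^ (Nat.gcd n (i : ℕ)) := by
    intro i
    have hequiv : MulAction.fixedBy (Fin n → A) (ψ i) ≃ {x : Fin n → A // (s ^ (i:ℕ)) x = x} := by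
      apply Equiv.subtypeEquivRight
      intro x
      rw [MulAction.mem_fixedBy]
      show ((ψ i : Equiv.Perm (Fin n → A)) x = x) ↔ ((s ^ (i:ℕ)) x = x)
      exact Iff.rfl
    rw [← Nat.card_eq_fintype_card, Nat.card_congr hequiv, card_fixed s hs (i : ℕ)]
  rw [hsum, Finset.sum_congr rfl (fun i _ => hterm i), hcardG] at hb
  have hsum2 : ∑ i : Fin n, (Fintype.card A) ^ (Nat.gcd n (i : ℕ))
      = ∑ k ∈ range n, (Fintype.card A) ^ (Nat.gcd n k) :=
    Fin.sum_univ_eq_sum_range (fun k => (Fintype.card A) ^ (Nat.gcd n k)) n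
  rw [hsum2, sum_gcd_pow n hn0.ne'] at hb
  rw [Nat.card_eq_fintype_card, mul_comm]
  exact hb.symm


lemma B1 (m : ℕ) (hm : m % 2 = 1) : ∀ k : ℕ, 1 ≤ k → (2^(k+2) : ℤ) ∣ (m:ℤ)^(2^k) - 1 := by
  intro k hk
  induction k with
  | zero => omega
  | succ k ih =>
    rcases Nat.eq_or_lt_of_le hk with h1 | h2
    · -- k + 1 = 1, so k = 0 : show 8 ∣ m^2 - 1
      have hk0 : k = 0 := by omega
      subst hk0
      obtain ⟨l, hl⟩ : ∃ l, m = 2*l + 1 := ⟨m/2, by omega⟩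
      have h2 : (2:ℤ) ∣ l * (l+1) := (Int.even_mul_succ_self l).two_dvd
      obtain ⟨u, hu⟩ := h2
      refine ⟨u, ?_⟩
      subst hl
      push_cast
      ring_nf
      ring_nf at hu
      nlinarith [hu]
    · have hk1 : 1 ≤ k := by omega
      have := ih hk1
      have h2 : (2:ℤ) ∣ (m:ℤ)^(2^k) + 1 := by
        have : (m:ℤ) % 2 = 1 := by omega
        have hodd : Odd (m:ℤ) := Int.odd_iff.mpr this
        have : Odd ((m:ℤ)^(2^k)) := hodd.pow
        obtain ⟨v, hv⟩ := this
        exact ⟨v+1, by omega⟩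
      have key : (m:ℤ)^(2^(k+1)) - 1 = ((m:ℤ)^(2^k) - 1) * ((m:ℤ)^(2^k) + 1) := by
        rw [pow_succ, pow_mul]
        ring
      rw [key]
      have : (2^(k+2) * 2 : ℤ) ∣ ((m:ℤ)^(2^k) - 1) * ((m:ℤ)^(2^k) + 1) :=
        mul_dvd_mul (ih hk1) h2
      calc (2^(k+1+2) : ℤ) = 2^(k+2)*2 := by ring
        _ ∣ _ := this

lemma B1' (m : ℕ) (hm : m % 2 = 1) (k c : ℕ) (hk : 1 ≤ k) :
    (2^(k+2) : ℤ) ∣ (m:ℤ)^(2^k * c) - 1 := by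
  have h1 := B1 m hm k hk
  have h2 : ((m:ℤ)^(2^k) - 1) ∣ ((m:ℤ)^(2^k))^c - 1 := by
    simpa using sub_dvd_pow_sub_pow ((m:ℤ)^(2^k)) 1 c
  rw [pow_mul]
  exact h1.trans h2

lemma B3 (m : ℕ) (hm : m % 4 = 3) (c : ℕ) (hc : c % 2 = 1) : (4:ℤ) ∣ (m:ℤ)^c + 1 := by
  have h1 : (m:ℤ) ≡ -1 [ZMOD 4] := by
    have : (m:ℤ) % 4 = 3 := by omega
    unfold Int.ModEq
    omega
  have h2 : (m:ℤ)^c ≡ (-1)^c [ZMOD 4] := h1.pow c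
  have h3 : ((-1:ℤ))^c = -1 := Odd.neg_one_pow (Nat.odd_iff.mpr hc)
  rw [h3] at h2
  have := Int.ModEq.add_right 1 h2
  simpa using (Int.modEq_iff_dvd.mp this.symm)

lemma totsum (a : ℕ) : ∑ j ∈ range (a+1), Nat.totient (2^j) = 2^a := by
  induction a with
  | zero => simp
  | succ a ih =>
    rw [Finset.sum_range_succ, ih, Nat.totient_prime_pow Nat.prime_two (Nat.succ_pos a)]
    simp
    ring

lemma phi2pow (j : ℕ) : Nat.totient (2^(j+1)) = 2^j := by
  rw [Nat.totient_prime_pow Nat.prime_two (Nat.succ_pos j)]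
  simp

lemma Tdvd (m a c : ℕ) (hm : m % 4 = 3) (ha : 1 ≤ a) (hc : c % 2 = 1) :
    (2^(a+1) : ℕ) ∣ ∑ j ∈ range (a+1), Nat.totient (2^j) * m ^ (2^(a-j) * c) := by
  have hm2 : m % 2 = 1 := by omega
  rw [← Int.natCast_dvd_natCast]
  push_cast
  have split : (∑ j ∈ range (a+1), (Nat.totient (2^j) : ℤ) * (m:ℤ) ^ (2^(a-j) * c))
      = (∑ j ∈ range (a+1), (Nat.totient (2^j) : ℤ) * ((m:ℤ) ^ (2^(a-j) * c) - 1)) + 2^a := by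
    have h2a : ((2:ℤ))^a = ∑ j ∈ range (a+1), ((Nat.totient (2^j) : ℤ)) := by
      exact_mod_cast congrArg (Nat.cast : ℕ → ℤ) (totsum a).symm
    rw [h2a, ← Finset.sum_add_distrib]
    apply Finset.sum_congr rfl
    intro j hj
    ring
  rw [split]
  -- peel off the j = a term
  rw [Finset.sum_range_succ]
  have hexp : a - a = 0 := by omega
  rw [hexp]
  have tail : (2^(a+1) : ℤ) ∣ ∑ j ∈ range a, (Nat.totient (2^j) : ℤ) * ((m:ℤ) ^ (2^(a-j) * c) - 1) := by
    apply Finset.dvd_sum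
    intro j hj
    have hj' : j < a := Finset.mem_range.mp hj
    have hk : 1 ≤ a - j := by omega
    have hd := B1' m hm2 (a-j) c hk
    cases j with
    | zero =>
      have h5 : (2^(a+1) : ℤ) ∣ (2^(a-0+2) : ℤ) := pow_dvd_pow 2 (by omega)
      simp only [pow_zero, Nat.totient_one, Nat.cast_one, one_mul]
      exact h5.trans hd
    | succ j' =>
      rw [phi2pow j']
      push_cast
      have : (2^(j' : ℕ) * 2^(a-(j'+1)+2) : ℤ) ∣ 2^(j') * ((m:ℤ) ^ (2^(a-(j'+1)) * c) - 1) :=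
        mul_dvd_mul_left _ hd
      calc (2^(a+1):ℤ) = 2^(j') * 2^(a-(j'+1)+2) := by
            rw [← pow_add]
            congr 1
            omega
        _ ∣ _ := this
  have head : (2^(a+1) : ℤ) ∣ (Nat.totient (2^a) : ℤ) * ((m:ℤ) ^ (2^0 * c) - 1) + 2^a := by
    obtain ⟨a', rfl⟩ : ∃ a', a = a' + 1 := ⟨a - 1, by omega⟩
    rw [phi2pow a']
    push_cast
    have heq : (2^(a':ℕ) : ℤ) * ((m:ℤ) ^ (1 * c) - 1) + 2^(a'+1)
        = 2^(a':ℕ) * ((m:ℤ)^c + 1) := by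
      rw [one_mul]
      ring
    rw [heq]
    have h4 := B3 m hm c hc
    calc (2^(a'+1+1):ℤ) = 2^(a':ℕ) * 4 := by ring
      _ ∣ 2^(a':ℕ) * ((m:ℤ)^c + 1) := mul_dvd_mul_left _ h4
  have hfin := dvd_add tail head
  convert hfin using 1
  · rfl
  · ring

lemma fact2 (j e : ℕ) (he : ¬ 2 ∣ e) (he0 : e ≠ 0) : (2^j * e).factorization 2 = j := by
  rw [Nat.factorization_mul (by positivity) he0]
  simp [Nat.Prime.factorization_pow Nat.prime_two, Nat.factorization_eq_zero_of_not_dvd he]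

lemma keyB (m a b : ℕ) (hm : m % 4 = 3) (ha : 1 ≤ a) (hb : b % 2 = 1) :
    2^(a+1) ∣ ∑ d ∈ (2^a * b).divisors, Nat.totient d * m ^ ((2^a * b) / d) := by
  have hb0 : b ≠ 0 := by omega
  have hn0 : 2^a * b ≠ 0 := by positivity
  have hbodd : ¬ 2 ∣ b := by omega
  have hfactn : (2^a * b).factorization 2 = a := fact2 a b hbodd hb0
  have hre : ∑ d ∈ (2^a*b).divisors, Nat.totient d * m ^ ((2^a*b)/d)
      = ∑ p ∈ (range (a+1)) ×ˢ b.divisors,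
          (Nat.totient (2^p.1) * Nat.totient p.2) * m ^ (2^(a-p.1) * (b/p.2)) := by
    refine Finset.sum_nbij' (i := fun d => (d.factorization 2, d / 2^(d.factorization 2)))
      (j := fun p => 2^p.1 * p.2) ?_ ?_ ?_ ?_ ?_
    · intro d hd
      obtain ⟨hdvd, -⟩ := Nat.mem_divisors.mp hd
      have hd0 : d ≠ 0 := by rintro rfl; exact hn0 (Nat.eq_zero_of_zero_dvd hdvd)
      simp only [Finset.mem_product, Finset.mem_range, Nat.mem_divisors]
      refine ⟨?_, ?_, hb0⟩
      · have := (Nat.factorization_le_iff_dvd hd0 hn0).2 hdvd 2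
        rw [hfactn] at this
        omega
      · have := Nat.ordCompl_dvd_ordCompl_of_dvd hdvd 2
        rwa [hfactn, Nat.mul_div_cancel_left b (by positivity)] at this
    · rintro ⟨j, e⟩ hp
      rw [Finset.mem_product, Finset.mem_range, Nat.mem_divisors] at hp
      have hj : j ≤ a := by have := hp.1; omega
      exact Nat.mem_divisors.mpr ⟨mul_dvd_mul (pow_dvd_pow 2 hj) hp.2.1, hn0⟩
    · intro d hd
      have hd0 : d ≠ 0 := by
        rintro rfl
        exact hn0 (Nat.eq_zero_of_zero_dvd (Nat.mem_divisors.mp hd).1)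
      exact Nat.ordProj_mul_ordCompl_eq_self d 2
    · rintro ⟨j, e⟩ hp
      rw [Finset.mem_product, Nat.mem_divisors] at hp
      have he0 : e ≠ 0 := by rintro rfl; exact hb0 (Nat.eq_zero_of_zero_dvd hp.2.1)
      have heodd : ¬ 2 ∣ e := fun h => hbodd (h.trans hp.2.1)
      have hf := fact2 j e heodd he0
      have : (2^j * e) / 2^((2^j*e).factorization 2) = e := by
        rw [hf, Nat.mul_div_cancel_left e (by positivity)]
      exact Prod.ext (by simpa using hf) (by simpa using this)
    · intro d hd
      obtain ⟨hdvd, -⟩ := Nat.mem_divisors.mp hd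
      have hd0 : d ≠ 0 := by rintro rfl; exact hn0 (Nat.eq_zero_of_zero_dvd hdvd)
      have hsplit : d = 2^(d.factorization 2) * (d / 2^(d.factorization 2)) :=
        (Nat.ordProj_mul_ordCompl_eq_self d 2).symm
      set j := d.factorization 2 with hjdef
      set e := d / 2^j with hedef
      have he0 : e ≠ 0 := by
        rintro h
        rw [h, mul_zero] at hsplit
        exact hd0 hsplit
      have heodd : ¬ 2 ∣ e := Nat.not_dvd_ordCompl Nat.prime_two hd0
      have hja : j ≤ a := by
        have := (Nat.factorization_le_iff_dvd hd0 hn0).2 hdvd 2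
        omega
      have hedvd : e ∣ b := by
        have := Nat.ordCompl_dvd_ordCompl_of_dvd hdvd 2
        rwa [hfactn, Nat.mul_div_cancel_left b (by positivity)] at this
      have htot : Nat.totient d = Nat.totient (2^j) * Nat.totient e := by
        conv_lhs => rw [hsplit]
        exact Nat.totient_mul (Nat.Coprime.pow_left j ((Nat.Prime.coprime_iff_not_dvd Nat.prime_two).mpr heodd))
      have hdiv : (2^a*b)/d = 2^(a-j) * (b/e) := by
        conv_lhs => rw [hsplit]
        rw [← Nat.pow_div hja (by norm_num)]
        exact (Nat.div_mul_div_comm (pow_dvd_pow 2 hja) hedvd).symm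
      rw [htot, hdiv]
  rw [hre, Finset.sum_product, Finset.sum_comm]
  apply Finset.dvd_sum
  intro e he
  have heodd : e % 2 = 1 := by
    have hedvd := (Nat.mem_divisors.mp he).1
    have : ¬ 2 ∣ e := fun h => (by omega : ¬ 2 ∣ b) (h.trans hedvd)
    omega
  have hceodd : (b / e) % 2 = 1 := by
    have hedvd := (Nat.mem_divisors.mp he).1
    have : ¬ 2 ∣ (b / e) := fun h => (by omega : ¬ 2 ∣ b) (h.trans (Nat.div_dvd_of_dvd hedvd))
    omega
  have hT := Tdvd m a (b/e) hm ha hceodd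
  have : ∑ j ∈ range (a+1), Nat.totient (2^j) * Nat.totient e * m ^ (2^(a-j) * (b/e))
      = Nat.totient e * ∑ j ∈ range (a+1), Nat.totient (2^j) * m ^ (2^(a-j) * (b/e)) := by
    rw [Finset.mul_sum]
    exact Finset.sum_congr rfl fun j _ => by ring
  rw [this]
  exact hT.mul_left _

/-- if `m ≡ 3 (mod 4)` and `n` is even, then the necklace count
`N(n,m)` — the number of orbits of cyclic rotation on `Σ^n`, which satisfies
`n·N(n,m) = Σ_{d∣n} φ(d)·m^{n/d}` — is even. -/
theorem necklace_count_even (m n : ℕ) (hm : m % 4 = 3) (hn : Even n) (hn0 : 0 < n)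
    (A : Type) [Fintype A] [DecidableEq A] (hA : Fintype.card A = m)
    (s : Equiv.Perm (Fin n → A)) (hs : ∀ x, s x = cycShift x) :
    n * Nat.card (MulAction.orbitRel.Quotient (Subgroup.zpowers s) (Fin n → A)) =
        ∑ d ∈ n.divisors, Nat.totient d * m ^ (n / d) ∧
    Even (Nat.card (MulAction.orbitRel.Quotient (Subgroup.zpowers s) (Fin n → A))) := by
  haveI : NeZero n := ⟨hn0.ne'⟩
  have hA2 : 2 ≤ Fintype.card A := by rw [hA]; omega
  have hEq := partA A n hn0 hA2 s hs
  rw [hA] at hEq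
  refine ⟨hEq, ?_⟩
  set N := Nat.card (MulAction.orbitRel.Quotient (Subgroup.zpowers s) (Fin n → A)) with hN
  set a := n.factorization 2 with hadef
  set b := n / 2^a with hbdef
  have hnsplit : n = 2^a * b := (Nat.ordProj_mul_ordCompl_eq_self n 2).symm
  have ha1 : 1 ≤ a := by
    have h2n : 2 ∣ n := hn.two_dvd
    exact Nat.Prime.factorization_pos_of_dvd Nat.prime_two hn0.ne' h2n
  have hbodd : ¬ 2 ∣ b := Nat.not_dvd_ordCompl Nat.prime_two hn0.ne'
  have hb1 : b % 2 = 1 := by omega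
  have hdvdS := keyB m a b hm ha1 hb1
  rw [← hnsplit, ← hEq] at hdvdS
  have hstep : 2^a * 2 ∣ 2^a * (b * N) := by
    calc 2^a*2 = 2^(a+1) := by ring
      _ ∣ n * N := hdvdS
      _ = 2^a * (b*N) := by rw [hnsplit]; ring
  have h2bN : 2 ∣ b * N := (Nat.mul_dvd_mul_iff_left (by positivity : 0 < 2^a)).mp hstep
  have h2N : 2 ∣ N := by
    rcases (Nat.Prime.dvd_mul Nat.prime_two).mp h2bN with h | h
    · omega
    · exact h
  exact even_iff_two_dvd.mpr h2N
end

section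
/- For m ≡ 3 (mod 4) and n even, the sign of the cyclic left shift σ on Σ^n is −1. -/
lemma sign_of_sq_eq_one {X : Type*} [Fintype X] [DecidableEq X] (f : Equiv.Perm X)
    (hf : f * f = 1) : Equiv.Perm.sign f = (-1) ^ (f.support.card / 2) := by
  have horder : orderOf f ∣ 2 := orderOf_dvd_of_pow_eq_one (by rw [pow_two]; exact hf)
  have h2 : ∀ p ∈ f.cycleType, p = 2 := by
    intro p hp
    have hdvd : p ∣ 2 := (Multiset.dvd_lcm hp).trans (f.lcm_cycleType ▸ horder)
    have hle := Equiv.Perm.two_le_of_mem_cycleType hp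
    exact Nat.le_antisymm (Nat.le_of_dvd two_pos hdvd) hle
  have hrep : f.cycleType = Multiset.replicate (Multiset.card f.cycleType) 2 :=
    Multiset.eq_replicate_card.mpr h2
  have hsum : f.support.card = 2 * Multiset.card f.cycleType := by
    conv_lhs => rw [← f.sum_cycleType, hrep]
    simp [Multiset.sum_replicate, mul_comm]
  rw [Equiv.Perm.sign_of_cycleType, hsum]
  have h3 : 2 * Multiset.card f.cycleType / 2 = Multiset.card f.cycleType := by omega
  rw [h3, hrep]
  simp [Multiset.sum_replicate]
  rw [pow_add, pow_mul]
  norm_num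

/-- Composition with `p.symm` as a monoid hom `Perm (Fin n) →* Perm (Fin n → A)`. -/
def permComp (A : Type) (n : ℕ) : Equiv.Perm (Fin n) →* Equiv.Perm (Fin n → A) where
  toFun p :=
    { toFun := fun x => x ∘ p.symm
      invFun := fun x => x ∘ p
      left_inv := fun x => by funext i; simp
      right_inv := fun x => by funext i; simp }
  map_one' := by ext x i; simp; rfl
  map_mul' p q := by ext x i; simp [Equiv.Perm.mul_def, Equiv.symm_trans_apply]

lemma permComp_apply (A : Type) (n : ℕ) (p : Equiv.Perm (Fin n)) (x : Fin n → A) (i : Fin n) :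
    permComp A n p x i = x (p.symm i) := rfl

lemma sign_permComp_swap (m k : ℕ) (hm : m % 4 = 3) (A : Type) [Fintype A] [DecidableEq A]
    (hA : Fintype.card A = m) :
    Equiv.Perm.sign (permComp A (k+2) (Equiv.swap 0 1)) = -1 := by
  have hff : permComp A (k+2) (Equiv.swap 0 1) * permComp A (k+2) (Equiv.swap 0 1) = 1 := by
    rw [← map_mul, Equiv.swap_mul_self, map_one]
  have key : ∀ x : Fin (k+2) → A, permComp A (k+2) (Equiv.swap 0 1) x = x ↔ x 0 = x 1 := by
    intro x
    constructor
    · intro h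
      have h1 := congrFun h 1
      rw [permComp_apply, Equiv.symm_swap, Equiv.swap_apply_right] at h1
      exact h1
    · intro h; funext i
      rw [permComp_apply, Equiv.symm_swap]
      rcases eq_or_ne i 0 with rfl | h0
      · rw [Equiv.swap_apply_left]; exact h.symm
      rcases eq_or_ne i 1 with rfl | h1
      · rw [Equiv.swap_apply_right]; exact h
      · rw [Equiv.swap_apply_of_ne_of_ne h0 h1]
  have hsupp : (permComp A (k+2) (Equiv.swap 0 1)).support
      = Finset.univ.filter (fun x => ¬ x 0 = x 1) := by
    ext x
    simp only [Equiv.Perm.mem_support, Finset.mem_filter, Finset.mem_univ, true_and]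
    exact not_congr (key x)
  have E : {x : Fin (k+2) → A // x 0 = x 1} ≃ (Fin (k+1) → A) :=
  { toFun := fun x j => x.1 j.succ
    invFun := fun y => ⟨Fin.cons (y 0) y, by
      rw [show (1 : Fin (k+2)) = Fin.succ 0 from (Fin.succ_zero_eq_one).symm]
      rw [Fin.cons_zero, Fin.cons_succ]⟩
    left_inv := fun x => by
      apply Subtype.ext
      funext i
      refine Fin.cases ?_ (fun j => ?_) i
      · simpa [Fin.succ_zero_eq_one] using x.2.symm
      · simp
    right_inv := fun y => by funext j; simp [Fin.cons_succ] }
  have hcfix : (Finset.univ.filter (fun x : Fin (k+2) → A => x 0 = x 1)).card = m ^ (k+1) := by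
    rw [← Fintype.card_subtype]
    rw [Fintype.card_congr E]
    simp [hA]
  have hctot : Fintype.card (Fin (k+2) → A) = m ^ (k+2) := by simp [hA]
  have hcard : (permComp A (k+2) (Equiv.swap 0 1)).support.card = m ^ (k+2) - m ^ (k+1) := by
    have htot := Finset.card_filter_add_card_filter_not
      (s := (Finset.univ : Finset (Fin (k+2) → A))) (p := fun x => x 0 = x 1)
    rw [Finset.card_univ, hctot, hcfix] at htot
    rw [hsupp]
    exact Nat.eq_sub_of_add_eq' htot
  clear hsupp hcfix hctot key E
  obtain ⟨j, hj⟩ : ∃ j, m = 4*j + 3 := ⟨m / 4, by omega⟩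
  have hstep : m ^ (k+2) - m ^ (k+1) = 2 * (m ^ (k+1) * (2*j+1)) := by
    have h1 : m ^ (k+2) = m ^ (k+1) * m := by ring
    have h2 : m ^ (k+1) * m = m ^ (k+1) + 2 * (m ^ (k+1) * (2*j+1)) := by rw [hj]; ring
    omega
  have hodd : Odd (m ^ (k+1) * (2*j+1)) := by
    have hm' : Odd m := ⟨2*j+1, by omega⟩
    exact (hm'.pow).mul ⟨j, by omega⟩
  rw [sign_of_sq_eq_one _ hff, hcard, hstep]
  rw [Nat.mul_div_cancel_left _ (by norm_num)]
  exact hodd.neg_one_pow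

/-- for `m ≡ 3 (mod 4)` and `n` even, the sign of the cyclic
left shift `σ` on `Σ^n` (with `|Σ| = m`) is `−1`. -/
theorem sign_shift_neg_one (m n : ℕ) (hm : m % 4 = 3) (hn : Even n) (hn0 : 0 < n)
    (A : Type) [Fintype A] [DecidableEq A] (hA : Fintype.card A = m)
    (s : Equiv.Perm (Fin n → A)) (hs : ∀ x, s x = cycShift x) :
    Equiv.Perm.sign s = -1 := by
  obtain ⟨r, hr⟩ := hn
  obtain ⟨k, rfl⟩ : ∃ k, n = k + 2 := ⟨n - 2, by omega⟩
  have hk : Odd (k + 1) := ⟨r - 1, by omega⟩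
  have hseq : s = permComp A (k+2) (finRotate (k+2))⁻¹ := by
    apply Equiv.ext
    intro x
    rw [hs x]
    funext i
    have hrhs : permComp A (k+2) (finRotate (k+2))⁻¹ x i = x (finRotate (k+2) i) := rfl
    rw [hrhs, finRotate_succ_apply]
    unfold cycShift
    split_ifs with h
    · congr 1
      apply Fin.ext
      simp [Fin.val_add, Fin.val_one, Nat.mod_eq_of_lt h]
    · congr 1
      apply Fin.ext
      have h2 : (i : ℕ) + 1 = k + 2 := by have := i.isLt; omega
      simp [Fin.val_add, Fin.val_one, h2]
  have hsign : (Equiv.Perm.sign.comp (permComp A (k+2))) = Equiv.Perm.sign :=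
    Equiv.Perm.eq_sign_of_surjective_hom (by
      intro u
      rcases Int.units_eq_one_or u with rfl | rfl
      · exact ⟨1, by simp⟩
      · exact ⟨Equiv.swap 0 1, by simpa using sign_permComp_swap m k hm A hA⟩)
  have : Equiv.Perm.sign s = Equiv.Perm.sign (finRotate (k+2))⁻¹ := by
    rw [hseq]
    have := congrFun (congrArg DFunLike.coe hsign) (finRotate (k+2))⁻¹
    simpa using this
  rw [this, map_inv, sign_finRotate]
  rw [show k + 2 - 1 = k + 1 by omega, hk.neg_one_pow]
  rfl
end
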